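/- Limits of right q-deformed rationals at irrational points: let 0 < q < 1 and let t be an irrational real number. If (x_m) is any sequence of rational numbers converging to t, then the sequence ([x_m]♯_q) converges in ℝ. Moreover, the limit is uniquely determined by t: if (y_m) is another sequence of rationals converging to the same t, then lim [x_m]♯_q = lim [y_m]♯_q. -/

import Mathlib

open Matrix Filter

/-- The q-deformed generator σ₁(q) = [[q⁻¹, −q⁻¹], [0, 1]]. -/
noncomputable def sig1 (q : ℝ) : Matrix (Fin 2) (Fin 2) ℝ := !![q⁻¹, -q⁻¹; 0, 1]

/-- The q-deformed generator σ₂(q) = [[1, 0], [1, q⁻¹]]. -/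
noncomputable def sig2 (q : ℝ) : Matrix (Fin 2) (Fin 2) ℝ := !![1, 0; 1, q⁻¹]

/-- `betaMat q a k` is the product of the first `k` alternating factors
`σ₁(q)^{-a 1} · σ₂(q)^{a 2} · σ₁(q)^{-a 3} ⋯` (indices start at 1). -/
noncomputable def betaMat (q : ℝ) (a : ℕ → ℤ) : ℕ → Matrix (Fin 2) (Fin 2) ℝ
  | 0 => 1
  | k + 1 => betaMat q a k *
      (if (k + 1) % 2 = 1 then sig1 q ^ (-(a (k + 1))) else sig2 q ^ (a (k + 1)))

/-- Möbius action of a 2×2 real matrix on a real number: z ↦ (Az + B)/(Cz + D). -/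
noncomputable def mobiusAct (M : Matrix (Fin 2) (Fin 2) ℝ) (z : ℝ) : ℝ :=
  (M 0 0 * z + M 0 1) / (M 1 0 * z + M 1 1)

/-- Möbius image of ∞ under a 2×2 real matrix: ∞ ↦ A/C. -/
noncomputable def mobiusInf (M : Matrix (Fin 2) (Fin 2) ℝ) : ℝ := M 0 0 / M 1 0

/-- `a` (on indices 1,…,2n) is an even continued form: either `a₁ ≥ 0` and `aᵢ ≥ 1` for
`2 ≤ i ≤ 2n`, or `a₁ ≤ 0` and `aᵢ ≤ −1` for `2 ≤ i ≤ 2n`. -/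
def IsEvenForm (n : ℕ) (a : ℕ → ℤ) : Prop :=
  1 ≤ n ∧ ((0 ≤ a 1 ∧ ∀ i, 2 ≤ i → i ≤ 2 * n → 1 ≤ a i)
    ∨ (a 1 ≤ 0 ∧ ∀ i, 2 ≤ i → i ≤ 2 * n → a i ≤ -1))

/-- Value of the continued fraction `a i + 1/(a (i+1) + 1/(⋯ + 1/(a last)))`. -/
def cfVal (a : ℕ → ℤ) (last i : ℕ) : ℚ :=
  if last ≤ i then (a i : ℚ)
  else (a i : ℚ) + 1 / cfVal a last (i + 1)
termination_by last - i
decreasing_by omega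

/-- `a` (on indices 1,…,2n) is the even continued fraction expansion of the rational `x`:
for `x ≠ 0` it is an even continued form of value `x`; by convention the expansion of `0`
is `(−1, 1)`. -/
def IsECFExp (n : ℕ) (a : ℕ → ℤ) (x : ℚ) : Prop :=
  (x ≠ 0 ∧ IsEvenForm n a ∧ cfVal a (2 * n) 1 = x) ∨
  (x = 0 ∧ n = 1 ∧ a 1 = -1 ∧ a 2 = 1)

/-- The right q-deformation attached to expansion data `(n, a)`:
the image of ∞ under the Möbius transformation of β(a, q). -/
noncomputable def sharpVal (q : ℝ) (n : ℕ) (a : ℕ → ℤ) : ℝ :=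
  mobiusInf (betaMat q a (2 * n))

/-- The left q-deformation attached to expansion data `(n, a)`:
the image of 1/(1−q) under the Möbius transformation of β(a, q). -/
noncomputable def flatVal (q : ℝ) (n : ℕ) (a : ℕ → ℤ) : ℝ :=
  mobiusAct (betaMat q a (2 * n)) (1 / (1 - q))

namespace SharpAux

/-- geometric sum `1 + q + ⋯ + q^(b-1)` -/
noncomputable def gs (q : ℝ) (b : ℕ) : ℝ := ∑ i ∈ Finset.range b, q ^ i

lemma gs_zero (q : ℝ) : gs q 0 = 0 := by simp [gs]

lemma gs_succ (q : ℝ) (b : ℕ) : gs q (b+1) = gs q b + q ^ b := by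
  simp [gs, Finset.sum_range_succ]

lemma gs_nonneg {q : ℝ} (hq : 0 ≤ q) (b : ℕ) : 0 ≤ gs q b := by
  apply Finset.sum_nonneg; intro i _; positivity

lemma gs_ge_one {q : ℝ} (hq : 0 ≤ q) {b : ℕ} (hb : 1 ≤ b) : 1 ≤ gs q b := by
  obtain ⟨c, rfl⟩ := Nat.exists_eq_add_of_le hb
  induction c with
  | zero => simp [gs]
  | succ c ih =>
      have h1 := ih (by omega)
      rw [show 1 + (c+1) = (1+c)+1 by ring, gs_succ]
      have : (0:ℝ) ≤ q ^ (1+c) := by positivity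
      linarith

lemma gs_succ' (q : ℝ) (b : ℕ) : gs q (b+1) = 1 + q * gs q b := by
  rw [gs, gs, geom_sum_succ]; ring

noncomputable def S1P (q : ℝ) (b : ℕ) : Matrix (Fin 2) (Fin 2) ℝ := !![q^b, gs q b; 0, 1]
noncomputable def S2P (q : ℝ) (b : ℕ) : Matrix (Fin 2) (Fin 2) ℝ := !![1, 0; gs q⁻¹ b, (q⁻¹)^b]
noncomputable def S1N (q : ℝ) (b : ℕ) : Matrix (Fin 2) (Fin 2) ℝ := !![(q⁻¹)^b, (q⁻¹)^b * gs q b; 0, 1]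
noncomputable def S2N (q : ℝ) (b : ℕ) : Matrix (Fin 2) (Fin 2) ℝ := !![1, 0; q * gs q b, q^b]

noncomputable def Kmat : Matrix (Fin 2) (Fin 2) ℝ := !![1, 0; 0, -1]

lemma Kmat_sq : Kmat * Kmat = 1 := by
  rw [Kmat, Matrix.mul_fin_two, Matrix.one_fin_two]; norm_num

variable {q : ℝ}

lemma sig1_inv (hq : q ≠ 0) : (sig1 q)⁻¹ = !![q, 1; 0, 1] := by
  apply Matrix.inv_eq_right_inv
  rw [sig1, Matrix.mul_fin_two, Matrix.one_fin_two]
  ext i j; fin_cases i <;> fin_cases j <;> simp [hq]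

lemma sig2_inv (hq : q ≠ 0) : (sig2 q)⁻¹ = !![1, 0; -q, q] := by
  apply Matrix.inv_eq_right_inv
  rw [sig2, Matrix.mul_fin_two, Matrix.one_fin_two]
  ext i j; fin_cases i <;> fin_cases j <;> simp [hq]

lemma sig1_inv_pow (hq : q ≠ 0) (b : ℕ) : (sig1 q)⁻¹ ^ b = S1P q b := by
  induction b with
  | zero => simp [S1P, gs_zero, Matrix.one_fin_two]
  | succ b ih =>
      rw [pow_succ, ih, sig1_inv hq, S1P, S1P, Matrix.mul_fin_two]
      ext i j; fin_cases i <;> fin_cases j <;> simp [gs_succ, pow_succ] <;> ring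

lemma sig2_pow (b : ℕ) : (sig2 q) ^ b = S2P q b := by
  induction b with
  | zero => simp [S2P, gs_zero, Matrix.one_fin_two]
  | succ b ih =>
      rw [pow_succ, ih, sig2, S2P, S2P, Matrix.mul_fin_two]
      ext i j; fin_cases i <;> fin_cases j <;> simp [gs_succ, pow_succ] <;> ring

lemma sig1_pow (hq : q ≠ 0) (b : ℕ) : (sig1 q) ^ b = !![(q⁻¹)^b, -((q⁻¹)^b * gs q b); 0, 1] := by
  induction b with
  | zero => simp [gs_zero, Matrix.one_fin_two]
  | succ b ih =>
      rw [pow_succ, ih, sig1, Matrix.mul_fin_two]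
      ext i j
      fin_cases i <;> fin_cases j <;> simp [gs_succ', pow_succ] <;> field_simp <;> ring

lemma sig2_inv_pow (hq : q ≠ 0) (b : ℕ) :
    (sig2 q)⁻¹ ^ b = !![1, 0; -(q * gs q b), q^b] := by
  induction b with
  | zero => simp [gs_zero, Matrix.one_fin_two]
  | succ b ih =>
      have key : gs q b + q ^ b = 1 + q * gs q b := by rw [← gs_succ, ← gs_succ']
      rw [pow_succ, ih, sig2_inv hq, Matrix.mul_fin_two]
      ext i j; fin_cases i <;> fin_cases j <;> simp [gs_succ', pow_succ] <;>
        linear_combination (-q) * key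

lemma sig1_zpow_neg (hq : q ≠ 0) (b : ℕ) : sig1 q ^ (-(b:ℤ)) = S1P q b := by
  rw [Matrix.zpow_neg_natCast, ← Matrix.inv_pow', sig1_inv_pow hq]


lemma sig2_zpow_pos (b : ℕ) : sig2 q ^ ((b:ℤ)) = S2P q b := by
  rw [zpow_natCast, sig2_pow]

lemma sig1_zpow_pos (hq : q ≠ 0) (b : ℕ) : sig1 q ^ ((b:ℤ)) = Kmat * S1N q b * Kmat := by
  rw [zpow_natCast, sig1_pow hq, Kmat, S1N, Matrix.mul_fin_two, Matrix.mul_fin_two]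
  ext i j; fin_cases i <;> fin_cases j <;> simp

lemma sig2_zpow_neg' (hq : q ≠ 0) (b : ℕ) : sig2 q ^ (-(b:ℤ)) = Kmat * S2N q b * Kmat := by
  rw [Matrix.zpow_neg_natCast, ← Matrix.inv_pow', sig2_inv_pow hq, Kmat, S2N,
    Matrix.mul_fin_two, Matrix.mul_fin_two]
  ext i j; fin_cases i <;> fin_cases j <;> simp

end SharpAux

namespace SharpAux

/-- Möbius image of ∞ (dup of mobiusInf for development). -/
noncomputable def mobInf (M : Matrix (Fin 2) (Fin 2) ℝ) : ℝ := M 0 0 / M 1 0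

/-- nonneg entries with positive diagonal -/
def Gd (M : Matrix (Fin 2) (Fin 2) ℝ) : Prop :=
  (∀ i j, 0 ≤ M i j) ∧ 0 < M 0 0 ∧ 0 < M 1 1

lemma Gd_one : Gd 1 := by
  refine ⟨fun i j => ?_, ?_, ?_⟩
  · rw [Matrix.one_apply]; split <;> norm_num
  · simp
  · simp

lemma Gd_mul {M N : Matrix (Fin 2) (Fin 2) ℝ} (hM : Gd M) (hN : Gd N) : Gd (M * N) := by
  obtain ⟨hM0, hM1, hM2⟩ := hM
  obtain ⟨hN0, hN1, hN2⟩ := hN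
  refine ⟨fun i j => ?_, ?_, ?_⟩ <;> simp only [Matrix.mul_apply, Fin.sum_univ_two]
  · have := hM0 i 0; have := hM0 i 1; have := hN0 0 j; have := hN0 1 j; positivity
  · exact add_pos_of_pos_of_nonneg (mul_pos hM1 hN1) (mul_nonneg (hM0 0 1) (hN0 1 0))
  · exact add_pos_of_nonneg_of_pos (mul_nonneg (hM0 1 0) (hN0 0 1)) (mul_pos hM2 hN2)

noncomputable def Qm (M : ℕ → Matrix (Fin 2) (Fin 2) ℝ) : ℕ → Matrix (Fin 2) (Fin 2) ℝ
  | 0 => 1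
  | j + 1 => Qm M j * M (j + 1)

noncomputable def tailP (M : ℕ → Matrix (Fin 2) (Fin 2) ℝ) (j : ℕ) :
    ℕ → Matrix (Fin 2) (Fin 2) ℝ
  | 0 => 1
  | l + 1 => tailP M j l * M (j + l + 1)

lemma Qm_add (M : ℕ → Matrix (Fin 2) (Fin 2) ℝ) (j l : ℕ) :
    Qm M (j + l) = Qm M j * tailP M j l := by
  induction l with
  | zero => simp [tailP]
  | succ l ih => rw [show j + (l+1) = (j+l)+1 by omega, Qm, ih, tailP, mul_assoc]

lemma Qm_congr {M M' : ℕ → Matrix (Fin 2) (Fin 2) ℝ} (j : ℕ)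
    (h : ∀ i, 1 ≤ i → i ≤ j → M i = M' i) : Qm M j = Qm M' j := by
  induction j with
  | zero => rfl
  | succ j ih =>
      rw [Qm, Qm, ih (fun i h1 h2 => h i h1 (by omega)), h (j+1) (by omega) le_rfl]

lemma det_bound (K x y : ℝ) (hK : 1 < K) (hx : x ≤ K * y) (hy : y ≤ K * x) :
    |x - y| ≤ (K - 1) / (K + 1) * (x + y) := by
  have hK1 : (0:ℝ) < K + 1 := by linarith
  rw [abs_sub_le_iff]
  constructor <;> (rw [div_mul_eq_mul_div, le_div_iff₀ hK1]; nlinarith)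

lemma den_bound (C D m00 m01 m10 m11 : ℝ) (hC : 0 < C) (hD : 0 < D)
    (h00 : 0 ≤ m00) (h01 : 0 ≤ m01) (h10 : 0 ≤ m10) (h11 : 0 ≤ m11) :
    C * D * (m00 * m11 + m01 * m10) ≤ (C * m00 + D * m10) * (C * m01 + D * m11) := by
  nlinarith [mul_nonneg (mul_nonneg (mul_pos hC hC).le h00) h01,
    mul_nonneg (mul_nonneg (mul_pos hD hD).le h10) h11]

lemma med_key (e C D w v : ℝ) (he : 0 ≤ e) (hC : 0 < C) (hD : 0 < D)
    (hw : 0 < w) (hv : 0 ≤ v) :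
    v * e * (C * D) ≤ e * ((C * w + D * v) * C) := by
  nlinarith [mul_nonneg (mul_nonneg he hC.le) (mul_nonneg hC.le hw.le)]

lemma abs_div_sub_div (A B C D : ℝ) (hC : 0 < C) (hD : 0 < D) :
    |A / C - B / D| = |A * D - B * C| / (C * D) := by
  rw [div_sub_div _ _ hC.ne' hD.ne', abs_div, abs_of_pos (mul_pos hC hD), mul_comm C B]

theorem abstract_conv (K : ℝ) (hK : 1 < K) (M : ℕ → Matrix (Fin 2) (Fin 2) ℝ)
    (hGd : ∀ j, 1 ≤ j → Gd (M j))
    (h10 : ∀ j, 1 ≤ j → 0 < M j 1 0)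
    (hKg : ∀ j, 2 ≤ j → 0 < M j 0 1 ∧
      M j 0 0 * M j 1 1 ≤ K * (M j 0 1 * M j 1 0) ∧
      M j 0 1 * M j 1 0 ≤ K * (M j 0 0 * M j 1 1)) :
    ∃ L : ℝ, ∀ ε : ℝ, 0 < ε → ∃ j, 1 ≤ j ∧
      ∀ R, Gd R → |mobInf (Qm M j * R) - L| < ε := by
  set ρ := (K - 1) / (K + 1) with hρdef
  have hK1 : (0:ℝ) < K + 1 := by linarith
  have hρ0 : 0 ≤ ρ := div_nonneg (by linarith) (by linarith)
  have hρ1 : ρ < 1 := by rw [hρdef, div_lt_one hK1]; linarith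
  have hQGd : ∀ j, 1 ≤ j → Gd (Qm M j) := by
    intro j hj
    induction j with
    | zero => omega
    | succ j ih =>
        have h1 : Gd (Qm M j) := by
          rcases Nat.eq_zero_or_pos j with h | h
          · subst h; exact Gd_one
          · exact ih h
        exact Gd_mul h1 (hGd (j+1) (by omega))
  have hCD : ∀ j, 1 ≤ j → 0 < Qm M j 1 0 ∧ 0 < Qm M j 1 1 := by
    intro j hj
    induction j with
    | zero => omega
    | succ j ih =>
        rcases Nat.eq_zero_or_pos j with h | h
        · subst h
          have : Qm M 1 = M 1 := by rw [Qm, Qm, one_mul]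
          rw [this]
          exact ⟨h10 1 le_rfl, (hGd 1 le_rfl).2.2⟩
        · obtain ⟨hc, hd⟩ := ih h
          obtain ⟨hnn, h00, h11⟩ := hGd (j+1) (by omega)
          constructor
          · show 0 < (Qm M j * M (j+1)) 1 0
            simp only [Matrix.mul_apply, Fin.sum_univ_two]
            exact add_pos_of_pos_of_nonneg (mul_pos hc h00) (mul_nonneg hd.le (hnn 1 0))
          · show 0 < (Qm M j * M (j+1)) 1 1
            simp only [Matrix.mul_apply, Fin.sum_univ_two]
            exact add_pos_of_nonneg_of_pos (mul_nonneg hc.le (hnn 0 1)) (mul_pos hd h11)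
  set W : ℕ → ℝ := fun j => |Qm M j 0 0 / Qm M j 1 0 - Qm M j 0 1 / Qm M j 1 1| with hWdef
  have hWnn : ∀ j, 0 ≤ W j := fun j => abs_nonneg _
  -- mediant bound
  have med : ∀ j, 1 ≤ j → ∀ R, Gd R →
      |mobInf (Qm M j * R) - Qm M j 0 0 / Qm M j 1 0| ≤ W j := by
    intro j hj R hR
    obtain ⟨hC0, hD0⟩ := hCD j hj
    set A := Qm M j 0 0; set B := Qm M j 0 1; set C := Qm M j 1 0; set D := Qm M j 1 1
    have hw : 0 < R 0 0 := hR.2.1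
    have hv : 0 ≤ R 1 0 := hR.1 1 0
    have hden : 0 < C * R 0 0 + D * R 1 0 :=
      add_pos_of_pos_of_nonneg (mul_pos hC0 hw) (mul_nonneg hD0.le hv)
    have hmob : mobInf (Qm M j * R)
        = (A * R 0 0 + B * R 1 0) / (C * R 0 0 + D * R 1 0) := by
      rw [mobInf]
      congr 1 <;> simp [Matrix.mul_apply, Fin.sum_univ_two] <;> rfl
    rw [hmob]
    have hE : (A * R 0 0 + B * R 1 0) / (C * R 0 0 + D * R 1 0) - A / C
        = (R 1 0 * (B * C - A * D)) / ((C * R 0 0 + D * R 1 0) * C) := by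
      field_simp; ring
    have hW : W j = |A * D - B * C| / (C * D) := by
      rw [hWdef]
      show |A / C - B / D| = _
      exact abs_div_sub_div A B C D hC0 hD0
    rw [hE, hW, abs_div, abs_of_pos (mul_pos hden hC0)]
    rw [div_le_div_iff₀ (mul_pos hden hC0) (mul_pos hC0 hD0)]
    have habs : |R 1 0 * (B * C - A * D)| = R 1 0 * |A * D - B * C| := by
      rw [abs_mul, abs_of_nonneg hv, abs_sub_comm]
    rw [habs]
    exact med_key (|A * D - B * C|) C D (R 0 0) (R 1 0) (abs_nonneg _) hC0 hD0 hw hv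
  -- contraction
  have contract : ∀ j, 1 ≤ j → W (j+1) ≤ ρ * W j := by
    intro j hj
    obtain ⟨hC0, hD0⟩ := hCD j hj
    obtain ⟨hnnQ, _, _⟩ := hQGd j hj
    obtain ⟨hnn, hm00, hm11⟩ := hGd (j+1) (by omega)
    have hm10 : 0 < M (j+1) 1 0 := h10 (j+1) (by omega)
    obtain ⟨hm01, hx, hy⟩ := hKg (j+1) (by omega)
    set A := Qm M j 0 0; set B := Qm M j 0 1; set C := Qm M j 1 0; set D := Qm M j 1 1
    set m00 := M (j+1) 0 0; set m01 := M (j+1) 0 1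
    set m10 := M (j+1) 1 0; set m11 := M (j+1) 1 1
    have hA : 0 ≤ A := hnnQ 0 0
    have hB : 0 ≤ B := hnnQ 0 1
    have hC' : 0 < C * m00 + D * m10 :=
      add_pos_of_pos_of_nonneg (mul_pos hC0 hm00) (mul_nonneg hD0.le hm10.le)
    have hD' : 0 < C * m01 + D * m11 :=
      add_pos_of_nonneg_of_pos (mul_nonneg hC0.le hm01.le) (mul_pos hD0 hm11)
    have hq00 : Qm M (j+1) 0 0 = A * m00 + B * m10 := by
      show (Qm M j * M (j+1)) 0 0 = _
      simp [Matrix.mul_apply, Fin.sum_univ_two]; rfl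
    have hq01 : Qm M (j+1) 0 1 = A * m01 + B * m11 := by
      show (Qm M j * M (j+1)) 0 1 = _
      simp [Matrix.mul_apply, Fin.sum_univ_two]; rfl
    have hq10 : Qm M (j+1) 1 0 = C * m00 + D * m10 := by
      show (Qm M j * M (j+1)) 1 0 = _
      simp [Matrix.mul_apply, Fin.sum_univ_two]; rfl
    have hq11 : Qm M (j+1) 1 1 = C * m01 + D * m11 := by
      show (Qm M j * M (j+1)) 1 1 = _
      simp [Matrix.mul_apply, Fin.sum_univ_two]; rfl
    have hWj1 : W (j+1) = |(A * D - B * C) * (m00 * m11 - m01 * m10)|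
        / ((C * m00 + D * m10) * (C * m01 + D * m11)) := by
      rw [hWdef]
      show |Qm M (j+1) 0 0 / Qm M (j+1) 1 0 - Qm M (j+1) 0 1 / Qm M (j+1) 1 1| = _
      rw [hq00, hq01, hq10, hq11, abs_div_sub_div _ _ _ _ hC' hD']
      rw [show (A * m00 + B * m10) * (C * m01 + D * m11)
          - (A * m01 + B * m11) * (C * m00 + D * m10)
          = (A * D - B * C) * (m00 * m11 - m01 * m10) from by ring]
    have hWj : W j = |A * D - B * C| / (C * D) := by
      rw [hWdef]
      show |A / C - B / D| = _
      exact abs_div_sub_div A B C D hC0 hD0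
    have hdet : |m00 * m11 - m01 * m10| ≤ ρ * (m00 * m11 + m01 * m10) := by
      rw [hρdef]
      exact det_bound K _ _ hK hx hy
    have hden : C * D * (m00 * m11 + m01 * m10)
        ≤ (C * m00 + D * m10) * (C * m01 + D * m11) :=
      den_bound C D m00 m01 m10 m11 hC0 hD0 hm00.le hm01.le hm10.le hm11.le
    rw [hWj1, hWj, abs_mul, ← mul_div_assoc]
    rw [div_le_div_iff₀ (mul_pos hC' hD') (mul_pos hC0 hD0)]
    set P := |A * D - B * C|
    have hP : 0 ≤ P := abs_nonneg _
    calc P * |m00 * m11 - m01 * m10| * (C * D)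
        ≤ P * (ρ * (m00 * m11 + m01 * m10)) * (C * D) := by
          apply mul_le_mul_of_nonneg_right
            (mul_le_mul_of_nonneg_left hdet hP) (mul_pos hC0 hD0).le
      _ = (ρ * P) * (C * D * (m00 * m11 + m01 * m10)) := by ring
      _ ≤ (ρ * P) * ((C * m00 + D * m10) * (C * m01 + D * m11)) :=
          mul_le_mul_of_nonneg_left hden (mul_nonneg hρ0 hP)
  have Wbound : ∀ l, W (l+1) ≤ W 1 * ρ ^ l := by
    intro l
    induction l with
    | zero => simp
    | succ l ih =>
        calc W (l+1+1) ≤ ρ * W (l+1) := contract (l+1) (by omega)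
          _ ≤ ρ * (W 1 * ρ ^ l) := mul_le_mul_of_nonneg_left ih hρ0
          _ = W 1 * ρ ^ (l+1) := by ring
  set c : ℕ → ℝ := fun j => Qm M j 0 0 / Qm M j 1 0 with hcdef
  have hGdtail : ∀ j l, 1 ≤ j → Gd (tailP M j l) := by
    intro j l hj
    induction l with
    | zero => exact Gd_one
    | succ l ih => exact Gd_mul ih (hGd (j+l+1) (by omega))
  have hcm : ∀ j l, 1 ≤ j → |c (j+l) - c j| ≤ W j := by
    intro j l hj
    have h1 : c (j+l) = mobInf (Qm M j * tailP M j l) := by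
      rw [hcdef]
      show Qm M (j+l) 0 0 / Qm M (j+l) 1 0 = _
      rw [Qm_add]; rfl
    rw [h1]
    exact med j hj _ (hGdtail j l hj)
  have hcau : CauchySeq (fun l => c (l+1)) := by
    apply cauchySeq_of_le_geometric ρ (W 1) hρ1
    intro l
    rw [Real.dist_eq]
    calc |c (l+1) - c (l+1+1)| = |c ((l+1) + 1) - c (l+1)| := abs_sub_comm _ _
      _ ≤ W (l+1) := hcm (l+1) 1 (by omega)
      _ ≤ W 1 * ρ ^ l := Wbound l
  obtain ⟨L, hL⟩ := cauchySeq_tendsto_of_complete hcau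
  have hcL : ∀ j, 1 ≤ j → |c j - L| ≤ W j := by
    intro j hj
    have h1 : Tendsto (fun l => c (j + l)) atTop (nhds L) := by
      have he : (fun l => c (j + l)) = (fun l => c (l+1)) ∘ (fun l => l + (j-1)) := by
        funext l
        simp only [Function.comp_apply]
        congr 1
        omega
      rw [he]
      exact hL.comp (tendsto_add_atTop_nat (j-1))
    have h2 : Tendsto (fun l => |c (j+l) - c j|) atTop (nhds (|L - c j|)) :=
      (h1.sub_const (c j)).abs
    have h3 : |L - c j| ≤ W j :=
      le_of_tendsto h2 (Eventually.of_forall (fun l => hcm j l hj))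
    rwa [abs_sub_comm]
  refine ⟨L, fun ε hε => ?_⟩
  have htd : Tendsto (fun l : ℕ => W 1 * ρ ^ l * 2) atTop (nhds 0) := by
    have h1 := (tendsto_pow_atTop_nhds_zero_of_lt_one hρ0 hρ1).const_mul (W 1)
    have h2 := h1.mul_const 2
    simpa using h2
  obtain ⟨l, hl⟩ := (htd.eventually (gt_mem_nhds hε)).exists
  refine ⟨l+1, by omega, fun R hR => ?_⟩
  have h1 := med (l+1) (by omega) R hR
  have h2 := hcL (l+1) (by omega)
  calc |mobInf (Qm M (l+1) * R) - L|
      ≤ |mobInf (Qm M (l+1) * R) - c (l+1)| + |c (l+1) - L| := abs_sub_le _ _ _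
    _ ≤ W (l+1) + W (l+1) := add_le_add h1 h2
    _ ≤ W 1 * ρ ^ l * 2 := by have := Wbound l; linarith
    _ < ε := hl

end SharpAux

namespace SharpAux

lemma cfVal_last (a : ℕ → ℤ) {L i : ℕ} (h : L ≤ i) : cfVal a L i = a i := by
  rw [cfVal, if_pos h]

lemma cfVal_rec (a : ℕ → ℤ) {L i : ℕ} (h : i < L) :
    cfVal a L i = (a i : ℚ) + 1 / cfVal a L (i + 1) := by
  rw [cfVal, if_neg (by omega)]

-- tail bounds for positive even forms
lemma tailA (L : ℕ) (a : ℕ → ℤ) (h : ∀ i, 2 ≤ i → i ≤ L → 1 ≤ a i) :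
    ∀ i, 2 ≤ i → i ≤ L → 1 ≤ cfVal a L i ∧ cfVal a L i ≤ a i + 1 := by
  suffices H : ∀ j i, L - i ≤ j → 2 ≤ i → i ≤ L →
      1 ≤ cfVal a L i ∧ cfVal a L i ≤ a i + 1 by
    exact fun i h2 hL => H (L - i) i le_rfl h2 hL
  intro j
  induction j with
  | zero =>
      intro i hji h2 hL
      rw [cfVal_last a (by omega)]
      have h1 : (1:ℚ) ≤ (a i : ℚ) := by exact_mod_cast h i h2 hL
      exact ⟨h1, by linarith⟩
  | succ j ih =>
      intro i hji h2 hL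
      by_cases hiL : L ≤ i
      · rw [cfVal_last a hiL]
        have h1 : (1:ℚ) ≤ (a i : ℚ) := by exact_mod_cast h i h2 hL
        exact ⟨h1, by linarith⟩
      · have hlt : i < L := by omega
        rw [cfVal_rec a hlt]
        obtain ⟨hτ1, _⟩ := ih (i+1) (by omega) (by omega) (by omega)
        have hτpos : (0:ℚ) < cfVal a L (i+1) := by linarith
        have hfrac1 : 0 < 1 / cfVal a L (i+1) := by positivity
        have hfrac2 : 1 / cfVal a L (i+1) ≤ 1 := by
          rw [div_le_one hτpos]; linarith
        have hai : (1:ℚ) ≤ (a i : ℚ) := by exact_mod_cast h i h2 (by omega)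
        constructor <;> linarith

lemma tailB (L : ℕ) (a : ℕ → ℤ) (h : ∀ i, 2 ≤ i → i ≤ L → 1 ≤ a i)
    {i : ℕ} (h1 : 1 ≤ i) (hiL : i < L) :
    (a i : ℚ) < cfVal a L i ∧ cfVal a L i ≤ a i + 1 := by
  rw [cfVal_rec a hiL]
  obtain ⟨hτ1, _⟩ := tailA L a h (i+1) (by omega) (by omega)
  have hτpos : (0:ℚ) < cfVal a L (i+1) := by linarith
  have hfrac1 : 0 < 1 / cfVal a L (i+1) := by positivity
  have hfrac2 : 1 / cfVal a L (i+1) ≤ 1 := by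
    rw [div_le_one hτpos]; linarith
  constructor <;> linarith

lemma cfVal_neg (a : ℕ → ℤ) (L : ℕ) :
    ∀ i, cfVal (fun i => -(a i)) L i = -cfVal a L i := by
  suffices H : ∀ j i, L - i ≤ j → cfVal (fun i => -(a i)) L i = -cfVal a L i by
    exact fun i => H (L - i) i le_rfl
  intro j
  induction j with
  | zero =>
      intro i hi
      rw [cfVal_last _ (by omega), cfVal_last a (by omega)]
      push_cast
      ring
  | succ j ih =>
      intro i hi
      by_cases hiL : L ≤ i
      · rw [cfVal_last _ hiL, cfVal_last a hiL]; push_cast; ring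
      · have hlt : i < L := by omega
        rw [cfVal_rec _ hlt, cfVal_rec a hlt, ih (i+1) (by omega)]
        push_cast
        rw [one_div, one_div, inv_neg]
        ring

lemma posForm_value_pos (n : ℕ) (a : ℕ → ℤ) (hn : 1 ≤ n) (h1 : 0 ≤ a 1)
    (h2 : ∀ i, 2 ≤ i → i ≤ 2*n → 1 ≤ a i) : 0 < cfVal a (2*n) 1 := by
  obtain ⟨hlt, _⟩ := tailB (2*n) a h2 le_rfl (by omega)
  have : (0:ℚ) ≤ (a 1 : ℚ) := by exact_mod_cast h1
  linarith

end SharpAux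

namespace SharpAux

noncomputable def gauss (t : ℝ) : ℕ → ℝ
  | 0 => t
  | i + 1 => (Int.fract (gauss t i))⁻¹

noncomputable def digitZ (t : ℝ) (i : ℕ) : ℤ := ⌊gauss t (i - 1)⌋

lemma gauss_irrational {t : ℝ} (ht : Irrational t) : ∀ i, Irrational (gauss t i)
  | 0 => ht
  | (i+1) => by
      have h1 : Irrational (Int.fract (gauss t i)) := by
        have h2 := (gauss_irrational ht i).sub_intCast ⌊gauss t i⌋
        rwa [Int.self_sub_floor] at h2
      exact h1.inv

lemma gauss_fract_pos {t : ℝ} (ht : Irrational t) (i : ℕ) : 0 < Int.fract (gauss t i) :=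
  Int.fract_pos.mpr (fun h => (gauss_irrational ht i).ne_int ⌊gauss t i⌋ h)

lemma gauss_succ (t : ℝ) (i : ℕ) : gauss t (i+1) = (Int.fract (gauss t i))⁻¹ := rfl

lemma gauss_gt_one {t : ℝ} (ht : Irrational t) (i : ℕ) : 1 < gauss t (i+1) := by
  rw [gauss_succ]
  have h1 := gauss_fract_pos ht i
  have h2 := Int.fract_lt_one (gauss t i)
  exact (one_lt_inv₀ h1).2 h2

lemma digit_ge_one {t : ℝ} (ht : Irrational t) {i : ℕ} (h2 : 2 ≤ i) : 1 ≤ digitZ t i := by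
  rw [digitZ, Int.le_floor]
  obtain ⟨j, hj⟩ : ∃ j, i - 1 = j + 1 := ⟨i - 2, by omega⟩
  rw [hj]
  exact_mod_cast (gauss_gt_one ht j).le

lemma digit_one_nonneg {t : ℝ} (ht0 : 0 < t) : 0 ≤ digitZ t 1 := by
  rw [digitZ]
  exact Int.floor_nonneg.mpr (by simpa [gauss] using ht0.le)

theorem prefix_lemma {t : ℝ} (ht : Irrational t) :
    ∀ k : ℕ, ∀ ε : ℝ, 0 < ε → ∃ δ : ℝ, 0 < δ ∧ ∀ (x : ℚ) (n : ℕ) (a : ℕ → ℤ),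
      1 ≤ n → (∀ i, 2 ≤ i → i ≤ 2*n → 1 ≤ a i) → cfVal a (2*n) 1 = x →
      |(x:ℝ) - t| < δ →
      k < 2*n ∧ (∀ i, 1 ≤ i → i ≤ k → a i = digitZ t i) ∧
        |((cfVal a (2*n) (k+1) : ℚ) : ℝ) - gauss t k| < ε := by
  intro k
  induction k with
  | zero =>
      intro ε hε
      refine ⟨ε, hε, fun x n a hn h2 hval hx => ⟨by omega, fun i h1 h2' => by omega, ?_⟩⟩
      have he : ((cfVal a (2*n) (0+1) : ℚ) : ℝ) = (x:ℝ) := by norm_num [hval]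
      rw [he, show gauss t 0 = t from rfl]
      exact hx
  | succ k ih =>
      intro ε hε
      set T := gauss t k with hT
      have hTirr : Irrational T := gauss_irrational ht k
      set m : ℤ := ⌊T⌋ with hm
      have hfr0 : (0:ℝ) < T - m := by
        have h1 := Int.fract_pos.mpr (fun h => hTirr.ne_int ⌊T⌋ h)
        rwa [← Int.self_sub_floor] at h1
      have hfr1 : T - m < 1 := by
        have h1 := Int.fract_lt_one T
        rwa [← Int.self_sub_floor] at h1
      set ε' := min ((T - m)/2) (min ((m + 1 - T)/2) (ε * (T - m)^2 / 4)) with hε'def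
      have hε'pos : 0 < ε' := by
        apply lt_min
        · linarith
        apply lt_min
        · linarith
        · positivity
      have hε'1 : ε' ≤ (T - m)/2 := min_le_left _ _
      have hε'2 : ε' ≤ (m + 1 - T)/2 := le_trans (min_le_right _ _) (min_le_left _ _)
      have hε'3 : ε' ≤ ε * (T - m)^2 / 4 := le_trans (min_le_right _ _) (min_le_right _ _)
      obtain ⟨δ, hδpos, hδ⟩ := ih ε' hε'pos
      refine ⟨δ, hδpos, fun x n a hn h2 hval hx => ?_⟩
      obtain ⟨hk2n, hdig, hclose⟩ := hδ x n a hn h2 hval hx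
      set τq := cfVal a (2*n) (k+1) with hτqdef
      have habs := abs_lt.mp hclose
      have hτlo : (m:ℝ) < (τq:ℝ) := by linarith [habs.1]
      have hτhi : ((τq:ℝ)) < m + 1 := by linarith [habs.2]
      have hk1 : k + 1 < 2*n := by
        rcases lt_or_eq_of_le (show k+1 ≤ 2*n by omega) with h | h
        · exact h
        · exfalso
          have hlast : τq = ((a (k+1) : ℤ) : ℚ) := by
            rw [hτqdef, cfVal_last a (le_of_eq h.symm)]
          have h1 : (m:ℝ) < ((a (k+1):ℤ):ℝ) := by
            rw [hlast] at hτlo; exact_mod_cast hτlo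
          have h2' : ((a (k+1):ℤ):ℝ) < m + 1 := by
            rw [hlast] at hτhi; exact_mod_cast hτhi
          have h1' : m < a (k+1) := by exact_mod_cast h1
          have h2'' : (a (k+1):ℝ) < ((m + 1 : ℤ):ℝ) := by push_cast; exact h2'
          have h2''' : a (k+1) < m + 1 := by exact_mod_cast h2''
          omega
      have htail := tailB (2*n) a h2 (show 1 ≤ k+1 by omega) hk1
      have hlo : ((a (k+1):ℤ):ℝ) < (τq:ℝ) := by exact_mod_cast htail.1
      have hhi : (τq:ℝ) ≤ ((a (k+1):ℤ):ℝ) + 1 := by exact_mod_cast htail.2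
      have haint : a (k+1) = m := by
        have h1 : (m:ℝ) < ((a (k+1):ℤ):ℝ) + 1 := lt_of_lt_of_le hτlo hhi
        have h2' : ((a (k+1):ℤ):ℝ) < (m:ℝ) + 1 := lt_trans hlo hτhi
        have h1' : (m:ℝ) < ((a (k+1) + 1 : ℤ):ℝ) := by push_cast; exact h1
        have h2'' : ((a (k+1):ℤ):ℝ) < ((m + 1:ℤ):ℝ) := by push_cast; exact h2'
        have g1 : m < a (k+1) + 1 := by exact_mod_cast h1'
        have g2 : a (k+1) < m + 1 := by exact_mod_cast h2''
        omega
      have hdig' : ∀ i, 1 ≤ i → i ≤ k+1 → a i = digitZ t i := by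
        intro i h1 hik
        rcases Nat.lt_or_ge i (k+1) with h | h
        · exact hdig i h1 (by omega)
        · have hik' : i = k+1 := by omega
          subst hik'
          rw [haint, hm, digitZ]
          norm_num
          rfl
      have hrec : τq = (a (k+1) : ℚ) + 1 / cfVal a (2*n) (k+2) := by
        rw [hτqdef]; exact cfVal_rec a hk1
      have hτ'1 : 1 ≤ cfVal a (2*n) (k+2) :=
        (tailA (2*n) a h2 (k+2) (by omega) (by omega)).1
      have hτ'pos : (0:ℚ) < cfVal a (2*n) (k+2) := by linarith
      have hinv : cfVal a (2*n) (k+2) = (τq - (m:ℚ))⁻¹ := by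
        have h1 : τq - (m:ℚ) = 1 / cfVal a (2*n) (k+2) := by
          rw [hrec, haint]; ring
        rw [h1, one_div, inv_inv]
      have hg : gauss t (k+1) = (T - m)⁻¹ := by
        rw [gauss_succ, ← Int.self_sub_floor, ← hT, ← hm]
      refine ⟨by omega, hdig', ?_⟩
      rw [hinv, hg]
      have hτm : (T - m)/2 ≤ (τq:ℝ) - m := by linarith [habs.1]
      have hτmpos : 0 < (τq:ℝ) - m := by linarith
      have hcast : (((τq - (m:ℚ))⁻¹ : ℚ) : ℝ) = ((τq:ℝ) - m)⁻¹ := by push_cast; ring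
      rw [hcast]
      have hform : ((τq:ℝ) - m)⁻¹ - (T - m)⁻¹ = (T - (τq:ℝ)) / (((τq:ℝ) - m) * (T - m)) := by
        field_simp
        ring
      rw [hform, abs_div, abs_of_pos (mul_pos hτmpos hfr0)]
      rw [div_lt_iff₀ (mul_pos hτmpos hfr0)]
      have h1 : |T - (τq:ℝ)| < ε' := by rw [abs_sub_comm]; exact hclose
      have key : ε * ((T-m)/2 * (T-m)) ≤ ε * (((τq:ℝ)-m) * (T-m)) :=
        mul_le_mul_of_nonneg_left (mul_le_mul_of_nonneg_right hτm hfr0.le) hε.le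
      have h3 : 0 < ε * (T-m)^2 := by positivity
      nlinarith [key, h3, h1, hε'3]

end SharpAux

namespace SharpAux

variable {q : ℝ}

lemma sig1_zpow_neg' (hq : q ≠ 0) {z : ℤ} (hz : 0 ≤ z) :
    sig1 q ^ (-z) = S1P q z.toNat := by
  obtain ⟨b, rfl⟩ : ∃ b : ℕ, z = (b : ℤ) := ⟨z.toNat, by omega⟩
  rw [Int.toNat_natCast]
  exact sig1_zpow_neg hq b

lemma sig2_zpow_pos' {z : ℤ} (hz : 0 ≤ z) :
    sig2 q ^ z = S2P q z.toNat := by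
  obtain ⟨b, rfl⟩ : ∃ b : ℕ, z = (b : ℤ) := ⟨z.toNat, by omega⟩
  rw [Int.toNat_natCast]
  exact sig2_zpow_pos b

lemma sig1_zpow_pos' (hq : q ≠ 0) {z : ℤ} (hz : 0 ≤ z) :
    sig1 q ^ z = Kmat * S1N q z.toNat * Kmat := by
  obtain ⟨b, rfl⟩ : ∃ b : ℕ, z = (b : ℤ) := ⟨z.toNat, by omega⟩
  rw [Int.toNat_natCast]
  exact sig1_zpow_pos hq b

lemma sig2_zpow_neg'' (hq : q ≠ 0) {z : ℤ} (hz : 0 ≤ z) :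
    sig2 q ^ (-z) = Kmat * S2N q z.toNat * Kmat := by
  obtain ⟨b, rfl⟩ : ∃ b : ℕ, z = (b : ℤ) := ⟨z.toNat, by omega⟩
  rw [Int.toNat_natCast]
  exact sig2_zpow_neg' hq b

lemma betaMat_succ (q : ℝ) (a : ℕ → ℤ) (k : ℕ) :
    betaMat q a (k+1) = betaMat q a k *
      (if (k + 1) % 2 = 1 then sig1 q ^ (-(a (k + 1))) else sig2 q ^ (a (k + 1))) := rfl

lemma betaMat_zero (q : ℝ) (a : ℕ → ℤ) : betaMat q a 0 = 1 := rfl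

lemma betaMat_split (q : ℝ) (a : ℕ → ℤ) (j : ℕ) :
    ∀ l, betaMat q a (2*j + l) = betaMat q a (2*j) * betaMat q (fun i => a (2*j + i)) l := by
  intro l
  induction l with
  | zero => rw [Nat.add_zero, betaMat_zero, mul_one]
  | succ l ih =>
      rw [show 2*j + (l+1) = (2*j + l) + 1 by omega, betaMat_succ, ih,
        betaMat_succ q (fun i => a (2*j + i)) l, mul_assoc]
      congr 2
      rw [show 2*j + l + 1 = 2*j + (l+1) by omega]
      have hpar : (2*j + (l+1)) % 2 = (l + 1) % 2 := by omega
      rw [hpar]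

lemma betaMat_two_step (q : ℝ) (a : ℕ → ℤ) (j : ℕ) :
    betaMat q a (2*j+2) = betaMat q a (2*j) *
      (sig1 q ^ (-(a (2*j+1))) * sig2 q ^ (a (2*j+2))) := by
  have h1 : betaMat q a (2*j+2) = betaMat q a (2*j+1) *
      (if (2*j+1 + 1) % 2 = 1 then sig1 q ^ (-(a (2*j+1+1))) else sig2 q ^ (a (2*j+1+1))) :=
    betaMat_succ q a (2*j+1)
  have h2 : betaMat q a (2*j+1) = betaMat q a (2*j) *
      (if (2*j + 1) % 2 = 1 then sig1 q ^ (-(a (2*j+1))) else sig2 q ^ (a (2*j+1))) :=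
    betaMat_succ q a (2*j)
  rw [h1, h2, if_pos (by omega : (2*j+1) % 2 = 1), if_neg (by omega : ¬ (2*j+1+1) % 2 = 1),
    show 2*j+1+1 = 2*j+2 by omega, mul_assoc]

noncomputable def MposP (q : ℝ) (b c : ℕ) : Matrix (Fin 2) (Fin 2) ℝ := S1P q b * S2P q c
noncomputable def MnegP (q : ℝ) (b c : ℕ) : Matrix (Fin 2) (Fin 2) ℝ := S1N q b * S2N q c

lemma betaMat_pairs (hq : q ≠ 0) (a : ℕ → ℤ) :
    ∀ j, (∀ i, 1 ≤ i → i ≤ 2*j → 0 ≤ a i) →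
    betaMat q a (2*j) = Qm (fun i => MposP q (a (2*i - 1)).toNat (a (2*i)).toNat) j := by
  intro j
  induction j with
  | zero => intro _; rw [Nat.mul_zero, betaMat_zero]; rfl
  | succ j ih =>
      intro hcond
      have hc0 : ∀ i, 1 ≤ i → i ≤ 2*j → 0 ≤ a i := fun i hi1 hi2 => hcond i hi1 (by omega)
      rw [show 2*(j+1) = 2*j+2 by omega, betaMat_two_step, ih hc0, Qm]
      congr 1
      have hb : 0 ≤ a (2*j+1) := hcond _ (by omega) (by omega)
      have hc : 0 ≤ a (2*j+2) := hcond _ (by omega) (by omega)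
      rw [show 2*(j+1) - 1 = 2*j+1 by omega, show 2*(j+1) = 2*j+2 by omega,
        MposP, sig1_zpow_neg' hq hb, sig2_zpow_pos' hc]

lemma Gd_S1P (hq0 : 0 < q) (b : ℕ) : Gd (S1P q b) := by
  refine ⟨fun i j => ?_, ?_, ?_⟩
  · fin_cases i <;> fin_cases j <;> simp [S1P] <;> first
      | positivity
      | exact gs_nonneg hq0.le b
  · simp [S1P]; positivity
  · simp [S1P]

lemma Gd_S2P (hq0 : 0 < q) (b : ℕ) : Gd (S2P q b) := by
  have h : (0:ℝ) ≤ q⁻¹ := by positivity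
  refine ⟨fun i j => ?_, ?_, ?_⟩
  · fin_cases i <;> fin_cases j <;> simp [S2P] <;> first
      | positivity
      | exact gs_nonneg h b
  · simp [S2P]
  · simp [S2P]; positivity

lemma Gd_S1N (hq0 : 0 < q) (b : ℕ) : Gd (S1N q b) := by
  have h : (0:ℝ) ≤ gs q b := gs_nonneg hq0.le b
  refine ⟨fun i j => ?_, ?_, ?_⟩
  · fin_cases i <;> fin_cases j <;> simp [S1N] <;> positivity
  · simp [S1N]; positivity
  · simp [S1N]

lemma Gd_S2N (hq0 : 0 < q) (b : ℕ) : Gd (S2N q b) := by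
  have h : (0:ℝ) ≤ gs q b := gs_nonneg hq0.le b
  refine ⟨fun i j => ?_, ?_, ?_⟩
  · fin_cases i <;> fin_cases j <;> simp [S2N] <;> positivity
  · simp [S2N]
  · simp [S2N]; positivity

lemma Gd_betaTail (hq0 : 0 < q) (a : ℕ → ℤ) (l : ℕ)
    (h : ∀ i, 1 ≤ i → i ≤ l → 1 ≤ a i) : Gd (betaMat q a l) := by
  induction l with
  | zero => exact Gd_one
  | succ l ih =>
      rw [betaMat_succ]
      refine Gd_mul (ih (fun i hi1 hi2 => h i hi1 (by omega))) ?_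
      have hl : 0 ≤ a (l+1) := by have := h (l+1) (by omega) le_rfl; omega
      split_ifs
      · rw [sig1_zpow_neg' hq0.ne' hl]; exact Gd_S1P hq0 _
      · rw [sig2_zpow_pos' hl]; exact Gd_S2P hq0 _

noncomputable def betaN (q : ℝ) (e : ℕ → ℤ) : ℕ → Matrix (Fin 2) (Fin 2) ℝ
  | 0 => 1
  | k + 1 => betaN q e k *
      (if (k + 1) % 2 = 1 then S1N q (e (k+1)).toNat else S2N q (e (k+1)).toNat)

lemma betaN_succ (q : ℝ) (e : ℕ → ℤ) (k : ℕ) :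
    betaN q e (k+1) = betaN q e k *
      (if (k + 1) % 2 = 1 then S1N q (e (k+1)).toNat else S2N q (e (k+1)).toNat) := rfl

lemma betaN_zero (q : ℝ) (e : ℕ → ℤ) : betaN q e 0 = 1 := rfl

lemma conj_mul (N F : Matrix (Fin 2) (Fin 2) ℝ) :
    (Kmat * N * Kmat) * (Kmat * F * Kmat) = Kmat * (N * F) * Kmat := by
  have h : ∀ X : Matrix (Fin 2) (Fin 2) ℝ, Kmat * (Kmat * X) = X := fun X => by
    rw [← mul_assoc, Kmat_sq, one_mul]
  simp only [mul_assoc, h]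

lemma betaMat_eq_conj (hq : q ≠ 0) (a : ℕ → ℤ) :
    ∀ k, (∀ i, 1 ≤ i → i ≤ k → a i ≤ 0) →
    betaMat q a k = Kmat * betaN q (fun i => -(a i)) k * Kmat := by
  intro k
  induction k with
  | zero => intro _; rw [betaMat_zero, betaN_zero, mul_one, Kmat_sq]
  | succ k ih =>
      intro hcond
      have hc0 : ∀ i, 1 ≤ i → i ≤ k → a i ≤ 0 := fun i hi1 hi2 => hcond i hi1 (by omega)
      have hek : 0 ≤ -(a (k+1)) := by have := hcond (k+1) (by omega) le_rfl; omega
      rw [betaMat_succ, betaN_succ, ih hc0]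
      have hfac : (if (k + 1) % 2 = 1 then sig1 q ^ (-(a (k + 1))) else sig2 q ^ (a (k + 1)))
          = Kmat * (if (k + 1) % 2 = 1 then S1N q ((fun i => -(a i)) (k+1)).toNat
            else S2N q ((fun i => -(a i)) (k+1)).toNat) * Kmat := by
        by_cases hp : (k+1) % 2 = 1
        · rw [if_pos hp, if_pos hp]
          exact sig1_zpow_pos' hq hek
        · rw [if_neg hp, if_neg hp]
          conv_lhs => rw [show (a (k+1) : ℤ) = -(-(a (k+1))) from (neg_neg _).symm]
          exact sig2_zpow_neg'' hq hek
      rw [hfac, conj_mul]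

lemma betaN_split (q : ℝ) (e : ℕ → ℤ) (j : ℕ) :
    ∀ l, betaN q e (2*j + l) = betaN q e (2*j) * betaN q (fun i => e (2*j + i)) l := by
  intro l
  induction l with
  | zero => rw [Nat.add_zero, betaN_zero, mul_one]
  | succ l ih =>
      rw [show 2*j + (l+1) = (2*j + l) + 1 by omega, betaN_succ, ih,
        betaN_succ q (fun i => e (2*j + i)) l, mul_assoc]
      congr 2
      rw [show 2*j + l + 1 = 2*j + (l+1) by omega]
      have hpar : (2*j + (l+1)) % 2 = (l + 1) % 2 := by omega
      rw [hpar]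

lemma betaN_two_step (q : ℝ) (e : ℕ → ℤ) (j : ℕ) :
    betaN q e (2*j+2) = betaN q e (2*j) *
      (S1N q (e (2*j+1)).toNat * S2N q (e (2*j+2)).toNat) := by
  have h1 := betaN_succ q e (2*j+1)
  have h2 := betaN_succ q e (2*j)
  rw [show 2*j+2 = 2*j+1+1 by omega, h1, h2, if_pos (by omega : (2*j+1) % 2 = 1),
    if_neg (by omega : ¬ (2*j+1+1) % 2 = 1), show 2*j+1+1 = 2*j+2 by omega, mul_assoc]

lemma betaN_pairs (q : ℝ) (e : ℕ → ℤ) :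
    ∀ j, betaN q e (2*j) = Qm (fun i => MnegP q (e (2*i - 1)).toNat (e (2*i)).toNat) j := by
  intro j
  induction j with
  | zero => rw [Nat.mul_zero, betaN_zero]; rfl
  | succ j ih =>
      have hfac : (fun i => MnegP q (e (2*i - 1)).toNat (e (2*i)).toNat) (j+1)
          = S1N q (e (2*j+1)).toNat * S2N q (e (2*j+2)).toNat := by
        show MnegP q (e (2*(j+1) - 1)).toNat (e (2*(j+1))).toNat = _
        rw [show 2*(j+1) - 1 = 2*j+1 by omega, show 2*(j+1) = 2*j+2 by omega, MnegP]
      rw [show 2*(j+1) = 2*j+2 by omega, betaN_two_step, ih, Qm]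
      congr 1

lemma Gd_betaN (hq0 : 0 < q) (e : ℕ → ℤ) (l : ℕ) : Gd (betaN q e l) := by
  induction l with
  | zero => exact Gd_one
  | succ l ih =>
      rw [betaN_succ]
      refine Gd_mul ih ?_
      split_ifs
      · exact Gd_S1N hq0 _
      · exact Gd_S2N hq0 _

lemma mobInf_conj (N : Matrix (Fin 2) (Fin 2) ℝ) :
    mobInf (Kmat * N * Kmat) = -(mobInf N) := by
  rw [Matrix.eta_fin_two N, Kmat, Matrix.mul_fin_two, Matrix.mul_fin_two, mobInf, mobInf]
  simp [div_neg]

lemma mobiusInf_eq_mobInf (M : Matrix (Fin 2) (Fin 2) ℝ) : mobiusInf M = mobInf M := rfl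

end SharpAux

namespace SharpAux

variable {q : ℝ}

lemma MposP_entries (q : ℝ) (b c : ℕ) : MposP q b c =
    !![q^b + gs q b * gs q⁻¹ c, gs q b * (q⁻¹)^c; gs q⁻¹ c, (q⁻¹)^c] := by
  rw [MposP, S1P, S2P, Matrix.mul_fin_two]
  ext i j; fin_cases i <;> fin_cases j <;> simp <;> ring

lemma MnegP_entries (q : ℝ) (b c : ℕ) : MnegP q b c =
    !![(q⁻¹)^b + (q⁻¹)^b * gs q b * (q * gs q c), (q⁻¹)^b * gs q b * q^c;
       q * gs q c, q^c] := by
  rw [MnegP, S1N, S2N, Matrix.mul_fin_two]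
  ext i j; fin_cases i <;> fin_cases j <;> simp <;> ring

lemma Gd_MposP (hq0 : 0 < q) (b c : ℕ) : Gd (MposP q b c) := by
  have h1 : (0:ℝ) ≤ gs q b := gs_nonneg hq0.le b
  have h2 : (0:ℝ) ≤ gs q⁻¹ c := gs_nonneg (by positivity) c
  rw [MposP_entries]
  refine ⟨fun i j => ?_, ?_, ?_⟩
  · fin_cases i <;> fin_cases j <;> simp <;> positivity
  · simp; positivity
  · simp; positivity

lemma Gd_MnegP (hq0 : 0 < q) (b c : ℕ) : Gd (MnegP q b c) := by
  have h1 : (0:ℝ) ≤ gs q b := gs_nonneg hq0.le b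
  have h2 : (0:ℝ) ≤ gs q c := gs_nonneg hq0.le c
  rw [MnegP_entries]
  refine ⟨fun i j => ?_, ?_, ?_⟩
  · fin_cases i <;> fin_cases j <;> simp <;> positivity
  · simp; positivity
  · simp; positivity

lemma MposP_10_pos (hq0 : 0 < q) (b : ℕ) {c : ℕ} (hc : 1 ≤ c) : 0 < MposP q b c 1 0 := by
  have h2 : (1:ℝ) ≤ gs q⁻¹ c := gs_ge_one (by positivity) hc
  rw [MposP_entries]
  simp
  linarith

lemma MnegP_10_pos (hq0 : 0 < q) (b : ℕ) {c : ℕ} (hc : 1 ≤ c) : 0 < MnegP q b c 1 0 := by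
  have h2 : (1:ℝ) ≤ gs q c := gs_ge_one hq0.le hc
  rw [MnegP_entries]
  simp
  nlinarith

lemma Kgood_MposP (hq0 : 0 < q) (hq1 : q < 1) {b c : ℕ} (hb : 1 ≤ b) (hc : 1 ≤ c) :
    0 < MposP q b c 0 1 ∧
    MposP q b c 0 0 * MposP q b c 1 1 ≤ (1 + 1/q) * (MposP q b c 0 1 * MposP q b c 1 0) ∧
    MposP q b c 0 1 * MposP q b c 1 0 ≤ (1 + 1/q) * (MposP q b c 0 0 * MposP q b c 1 1) := by
  have hgb : (1:ℝ) ≤ gs q b := gs_ge_one hq0.le hb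
  have hgc : (1:ℝ) ≤ gs q⁻¹ c := gs_ge_one (by positivity) hc
  have hp : (0:ℝ) < (q⁻¹)^c := by positivity
  have hqb0 : (0:ℝ) < q^b := by positivity
  have hqb : q^b ≤ q := by
    calc q^b ≤ q^1 := pow_le_pow_of_le_one hq0.le hq1.le hb
    _ = q := pow_one q
  have e00 : MposP q b c 0 0 = q^b + gs q b * gs q⁻¹ c := by rw [MposP_entries]; simp
  have e01 : MposP q b c 0 1 = gs q b * (q⁻¹)^c := by rw [MposP_entries]; simp
  have e10 : MposP q b c 1 0 = gs q⁻¹ c := by rw [MposP_entries]; simp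
  have e11 : MposP q b c 1 1 = (q⁻¹)^c := by rw [MposP_entries]; simp
  rw [e00, e01, e10, e11]
  have hK : (1 + 1/q) = (q+1)/q := by field_simp
  have h1 : (1:ℝ) ≤ gs q b * gs q⁻¹ c := by nlinarith
  refine ⟨by positivity, ?_, ?_⟩
  · rw [hK, div_mul_eq_mul_div, le_div_iff₀ hq0]
    have h2 : q^b * q ≤ 1 := by nlinarith
    nlinarith [mul_le_mul_of_nonneg_left (le_trans h2 h1) hp.le]
  · rw [hK, div_mul_eq_mul_div, le_div_iff₀ hq0]
    nlinarith [mul_nonneg (mul_nonneg (by positivity : (0:ℝ) ≤ gs q b * gs q⁻¹ c) hp.le)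
      (by linarith : (0:ℝ) ≤ 1 - q), mul_nonneg hqb0.le hp.le]

lemma Kgood_MnegP (hq0 : 0 < q) (hq1 : q < 1) {b c : ℕ} (hb : 1 ≤ b) (hc : 1 ≤ c) :
    0 < MnegP q b c 0 1 ∧
    MnegP q b c 0 0 * MnegP q b c 1 1 ≤ (1 + 1/q) * (MnegP q b c 0 1 * MnegP q b c 1 0) ∧
    MnegP q b c 0 1 * MnegP q b c 1 0 ≤ (1 + 1/q) * (MnegP q b c 0 0 * MnegP q b c 1 1) := by
  have hG : (1:ℝ) ≤ gs q b := gs_ge_one hq0.le hb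
  have hGc : (1:ℝ) ≤ gs q c := gs_ge_one hq0.le hc
  have hu : (0:ℝ) < (q⁻¹)^b := by positivity
  have hp : (0:ℝ) < q^c := by positivity
  have e00 : MnegP q b c 0 0 = (q⁻¹)^b + (q⁻¹)^b * gs q b * (q * gs q c) := by
    rw [MnegP_entries]; simp
  have e01 : MnegP q b c 0 1 = (q⁻¹)^b * gs q b * q^c := by rw [MnegP_entries]; simp
  have e10 : MnegP q b c 1 0 = q * gs q c := by rw [MnegP_entries]; simp
  have e11 : MnegP q b c 1 1 = q^c := by rw [MnegP_entries]; simp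
  rw [e00, e01, e10, e11]
  have hK : (1 + 1/q) = (q+1)/q := by field_simp
  have h1 : (1:ℝ) ≤ gs q b * gs q c := by nlinarith
  refine ⟨by positivity, ?_, ?_⟩
  · rw [hK, div_mul_eq_mul_div, le_div_iff₀ hq0]
    nlinarith [mul_nonneg (mul_nonneg (mul_pos hu hp).le (mul_pos hq0 hq0).le)
      (sub_nonneg.mpr h1)]
  · rw [hK, div_mul_eq_mul_div, le_div_iff₀ hq0]
    nlinarith [mul_pos hu hp, mul_pos (mul_pos hu hp) hq0,
      mul_nonneg (mul_nonneg (mul_pos hu hp).le hq0.le)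
        (mul_nonneg (sub_nonneg.mpr hq1.le) (mul_nonneg (by linarith : (0:ℝ) ≤ gs q b)
          (by linarith : (0:ℝ) ≤ gs q c)))]

end SharpAux

namespace SharpAux

theorem main_pos (q : ℝ) (hq0 : 0 < q) (hq1 : q < 1) (t : ℝ) (ht : Irrational t)
    (htpos : 0 < t) :
    ∃ L : ℝ, ∀ (x : ℕ → ℚ) (n : ℕ → ℕ) (A : ℕ → ℕ → ℤ),
      Tendsto (fun m => (x m : ℝ)) atTop (nhds t) →
      (∀ m, IsECFExp (n m) (A m) (x m)) →
      Tendsto (fun m => sharpVal q (n m) (A m)) atTop (nhds L) := by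
  have hqne : q ≠ 0 := ne_of_gt hq0
  have hK : 1 < 1 + 1/q := by
    have h : 0 < 1/q := by positivity
    linarith
  have hdig2 : ∀ i, 2 ≤ i → 1 ≤ (digitZ t i).toNat := by
    intro i hi; have := digit_ge_one ht hi; omega
  obtain ⟨L, hL⟩ := abstract_conv (1 + 1/q) hK
    (fun i => MposP q (digitZ t (2*i - 1)).toNat (digitZ t (2*i)).toNat)
    (fun i _ => Gd_MposP hq0 _ _)
    (fun i hi => MposP_10_pos hq0 _ (hdig2 (2*i) (by omega)))
    (fun i hi => Kgood_MposP hq0 hq1 (hdig2 (2*i-1) (by omega)) (hdig2 (2*i) (by omega)))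
  refine ⟨L, fun x n A hx hexp => ?_⟩
  rw [Metric.tendsto_atTop]
  intro ε hε
  obtain ⟨j, hj1, hjR⟩ := hL ε hε
  obtain ⟨δ, hδ0, hpre⟩ := prefix_lemma ht (2*j) 1 (by norm_num)
  have hδ'0 : 0 < min δ t := lt_min hδ0 htpos
  obtain ⟨N, hN⟩ := (Metric.tendsto_atTop.mp hx) (min δ t) hδ'0
  refine ⟨N, fun m hm => ?_⟩
  have hxm := hN m hm
  rw [Real.dist_eq] at hxm
  have habs := abs_lt.mp hxm
  have hxpos : (0:ℝ) < ((x m : ℚ):ℝ) := by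
    have hmin : min δ t ≤ t := min_le_right _ _
    linarith [habs.1]
  have hxδ : |((x m : ℚ):ℝ) - t| < δ := lt_of_lt_of_le hxm (min_le_left _ _)
  rcases hexp m with ⟨hxne, ⟨hn1, hform⟩, hval⟩ | ⟨hx0, _⟩
  swap
  · rw [hx0] at hxpos; norm_num at hxpos
  rcases hform with ⟨h1, h2⟩ | ⟨h1, h2⟩
  swap
  · exfalso
    have hpos : 0 < cfVal (fun i => -(A m i)) (2 * n m) 1 := by
      apply posForm_value_pos (n m) _ hn1
      · show (0:ℤ) ≤ -(A m 1); omega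
      · intro i hi1 hi2
        show (1:ℤ) ≤ -(A m i)
        have := h2 i hi1 hi2; omega
    rw [cfVal_neg (A m) (2 * n m) 1, hval] at hpos
    have hlt : (x m) < 0 := by linarith [neg_pos.mp hpos]
    have hlt' : ((x m : ℚ):ℝ) < 0 := by exact_mod_cast hlt
    linarith
  obtain ⟨hlen, hdig, _⟩ := hpre (x m) (n m) (A m) hn1 h2 hval hxδ
  have hA0 : ∀ i, 1 ≤ i → i ≤ 2*j → 0 ≤ A m i := by
    intro i hi1 hi2
    rcases Nat.eq_or_lt_of_le hi1 with h | h
    · rw [← h]; exact h1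
    · have := h2 i (by omega) (by omega); omega
  have hpairs : betaMat q (A m) (2*j)
      = Qm (fun i => MposP q (digitZ t (2*i - 1)).toNat (digitZ t (2*i)).toNat) j := by
    rw [betaMat_pairs hqne (A m) j hA0]
    apply Qm_congr
    intro i hi1 hij
    have ha1 : A m (2*i - 1) = digitZ t (2*i - 1) := hdig (2*i-1) (by omega) (by omega)
    have ha2 : A m (2*i) = digitZ t (2*i) := hdig (2*i) (by omega) (by omega)
    show MposP q (A m (2*i - 1)).toNat (A m (2*i)).toNat = _
    rw [ha1, ha2]
  have hsplit : betaMat q (A m) (2 * n m)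
      = Qm (fun i => MposP q (digitZ t (2*i - 1)).toNat (digitZ t (2*i)).toNat) j
        * betaMat q (fun i => A m (2*j + i)) (2 * n m - 2*j) := by
    rw [← hpairs, ← betaMat_split q (A m) j (2 * n m - 2*j),
      show 2*j + (2 * n m - 2*j) = 2 * n m by omega]
  have hGdR : Gd (betaMat q (fun i => A m (2*j + i)) (2 * n m - 2*j)) := by
    apply Gd_betaTail hq0
    intro i hi1 hil
    exact h2 (2*j + i) (by omega) (by omega)
  have hfin := hjR _ hGdR
  rw [Real.dist_eq, sharpVal, mobiusInf_eq_mobInf, hsplit]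
  exact hfin

end SharpAux

namespace SharpAux

theorem main_neg (q : ℝ) (hq0 : 0 < q) (hq1 : q < 1) (t : ℝ) (ht : Irrational t)
    (htneg : t < 0) :
    ∃ L : ℝ, ∀ (x : ℕ → ℚ) (n : ℕ → ℕ) (A : ℕ → ℕ → ℤ),
      Tendsto (fun m => (x m : ℝ)) atTop (nhds t) →
      (∀ m, IsECFExp (n m) (A m) (x m)) →
      Tendsto (fun m => sharpVal q (n m) (A m)) atTop (nhds L) := by
  have hqne : q ≠ 0 := ne_of_gt hq0
  have hK : 1 < 1 + 1/q := by
    have h : 0 < 1/q := by positivity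
    linarith
  have ht' : Irrational (-t) := ht.neg
  have ht'pos : 0 < -t := by linarith
  have hdig2 : ∀ i, 2 ≤ i → 1 ≤ (digitZ (-t) i).toNat := by
    intro i hi; have := digit_ge_one ht' hi; omega
  obtain ⟨L, hL⟩ := abstract_conv (1 + 1/q) hK
    (fun i => MnegP q (digitZ (-t) (2*i - 1)).toNat (digitZ (-t) (2*i)).toNat)
    (fun i _ => Gd_MnegP hq0 _ _)
    (fun i hi => MnegP_10_pos hq0 _ (hdig2 (2*i) (by omega)))
    (fun i hi => Kgood_MnegP hq0 hq1 (hdig2 (2*i-1) (by omega)) (hdig2 (2*i) (by omega)))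
  refine ⟨-L, fun x n A hx hexp => ?_⟩
  rw [Metric.tendsto_atTop]
  intro ε hε
  obtain ⟨j, hj1, hjR⟩ := hL ε hε
  obtain ⟨δ, hδ0, hpre⟩ := prefix_lemma ht' (2*j) 1 (by norm_num)
  have hδ'0 : 0 < min δ (-t) := lt_min hδ0 ht'pos
  obtain ⟨N, hN⟩ := (Metric.tendsto_atTop.mp hx) (min δ (-t)) hδ'0
  refine ⟨N, fun m hm => ?_⟩
  have hxm := hN m hm
  rw [Real.dist_eq] at hxm
  have habs := abs_lt.mp hxm
  have hxneg : ((x m : ℚ):ℝ) < 0 := by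
    have hmin : min δ (-t) ≤ -t := min_le_right _ _
    linarith [habs.2]
  have hxδ : |((x m : ℚ):ℝ) - t| < δ := lt_of_lt_of_le hxm (min_le_left _ _)
  rcases hexp m with ⟨hxne, ⟨hn1, hform⟩, hval⟩ | ⟨hx0, _⟩
  swap
  · rw [hx0] at hxneg; norm_num at hxneg
  rcases hform with ⟨h1, h2⟩ | ⟨h1, h2⟩
  · exfalso
    have hpos : 0 < cfVal (A m) (2 * n m) 1 := posForm_value_pos (n m) (A m) hn1 h1 h2
    rw [hval] at hpos
    have hlt' : (0:ℝ) < ((x m : ℚ):ℝ) := by exact_mod_cast hpos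
    linarith
  -- negative even form
  have he1 : (0:ℤ) ≤ -(A m 1) := by omega
  have he2 : ∀ i, 2 ≤ i → i ≤ 2 * n m → (1:ℤ) ≤ -(A m i) := by
    intro i hi1 hi2; have := h2 i hi1 hi2; omega
  have he2' : ∀ i, 2 ≤ i → i ≤ 2 * n m → (1:ℤ) ≤ (fun i => -(A m i)) i := he2
  have heval : cfVal (fun i => -(A m i)) (2 * n m) 1 = -(x m) := by
    rw [cfVal_neg (A m) (2 * n m) 1, hval]
  have hx'δ : |((-(x m) : ℚ):ℝ) - (-t)| < δ := by
    have hcast : ((-(x m) : ℚ):ℝ) - (-t) = -(((x m : ℚ):ℝ) - t) := by push_cast; ring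
    rw [hcast, abs_neg]
    exact hxδ
  obtain ⟨hlen, hdig, _⟩ := hpre (-(x m)) (n m) (fun i => -(A m i)) hn1 he2' heval hx'δ
  have hA0 : ∀ i, 1 ≤ i → i ≤ 2 * n m → A m i ≤ 0 := by
    intro i hi1 hi2
    rcases Nat.eq_or_lt_of_le hi1 with h | h
    · rw [← h]; exact h1
    · have := h2 i (by omega) (by omega); omega
  have hconj : betaMat q (A m) (2 * n m)
      = Kmat * betaN q (fun i => -(A m i)) (2 * n m) * Kmat :=
    betaMat_eq_conj hqne (A m) (2 * n m) hA0
  have hpairsN : betaN q (fun i => -(A m i)) (2*j)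
      = Qm (fun i => MnegP q (digitZ (-t) (2*i - 1)).toNat (digitZ (-t) (2*i)).toNat) j := by
    rw [betaN_pairs]
    apply Qm_congr
    intro i hi1 hij
    have ha1 : -(A m (2*i - 1)) = digitZ (-t) (2*i - 1) := hdig (2*i-1) (by omega) (by omega)
    have ha2 : -(A m (2*i)) = digitZ (-t) (2*i) := hdig (2*i) (by omega) (by omega)
    show MnegP q (-(A m (2*i - 1))).toNat (-(A m (2*i))).toNat = _
    rw [ha1, ha2]
  have hsplitN : betaN q (fun i => -(A m i)) (2 * n m)
      = Qm (fun i => MnegP q (digitZ (-t) (2*i - 1)).toNat (digitZ (-t) (2*i)).toNat) j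
        * betaN q (fun i => -(A m (2*j + i))) (2 * n m - 2*j) := by
    rw [← hpairsN, ← betaN_split q (fun i => -(A m i)) j (2 * n m - 2*j),
      show 2*j + (2 * n m - 2*j) = 2 * n m by omega]
  have hGdR : Gd (betaN q (fun i => -(A m (2*j + i))) (2 * n m - 2*j)) :=
    Gd_betaN hq0 _ _
  have hfin := hjR _ hGdR
  rw [Real.dist_eq, sharpVal, mobiusInf_eq_mobInf, hconj, hsplitN, mobInf_conj]
  have habs2 : ∀ X : ℝ, |(-X) - (-L)| = |X - L| := fun X => by
    rw [show -X - -L = -(X - L) by ring, abs_neg]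
  rw [habs2]
  exact hfin

end SharpAux


/-- limits of right q-deformed rationals at irrational points:
for 0 < q < 1 and irrational t there is a single real L such that for every sequence of
rationals xₘ → t (with expansion data (n m, A m) for each xₘ), [xₘ]♯_q → L. -/
theorem sharp_limit_at_irrational (q : ℝ) (hq0 : 0 < q) (hq1 : q < 1)
    (t : ℝ) (ht : Irrational t) :
    ∃ L : ℝ, ∀ (x : ℕ → ℚ) (n : ℕ → ℕ) (A : ℕ → ℕ → ℤ),
      Tendsto (fun m => (x m : ℝ)) atTop (nhds t) →
      (∀ m, IsECFExp (n m) (A m) (x m)) →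
      Tendsto (fun m => sharpVal q (n m) (A m)) atTop (nhds L) := by
  have ht0 : t ≠ 0 := by
    intro h
    rw [h] at ht
    exact ht ⟨0, by norm_num⟩
  rcases lt_or_gt_of_ne ht0 with hneg | hpos
  · exact SharpAux.main_neg q hq0 hq1 t ht hneg
  · exact SharpAux.main_pos q hq0 hq1 t ht hpos
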